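/- arXiv:1104.1366 — 4 statements merged into one kernel-verified Lean document; each statement's English description precedes it below -/
import Mathlib

section
/- Let K be a field and A a left noetherian K-algebra without zero divisors. Let w ∈ A and let σ be a ring automorphism of A such that w·y = σ(y)·w for all y ∈ A. Let J be a maximal left ideal of A and μ ∈ K a nonzero scalar with w − μ·1 ∈ J. Let x ∈ A be a non-unit, set I = Jx, L = Ax/I, M = A/I and N = A/Ax. Assume: (4) for every m ≥ 0 there is no a ∈ A with σ^m(x)·a − 1 ∈ J; (5) the chain of submodules N ⊋ wN ⊋ w²N ⊋ … ⊋ w^mN ⊋ … is strictly descending; (6) every nonzero A-submodule of N contains w^mN for some m ≥ 0. Then M is an essential extension of L, i.e. the image of Ax in M = A/Jx is a simple submodule having nonzero intersection with every nonzero submodule of M; in particular M is a finitely generated monolithic non-artinian left A-module. -/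
/-- A module is monolithic if the intersection of all its nonzero submodules is nonzero. -/
def IsMonolithic (R : Type*) (M : Type*) [Ring R] [AddCommGroup M] [Module R M] : Prop :=
  sInf {N : Submodule R M | N ≠ ⊥} ≠ ⊥

/-- the main construction.  `A` is a left noetherian `K`-algebra without zero
divisors, `w ∈ A` and `σ` is a ring automorphism with `w * y = σ y * w` for all `y`,
`J` is a maximal left ideal with `w - μ•1 ∈ J` for a nonzero scalar `μ`, and `x` is a
non-unit.  Setting `I = Jx`, `M = A/I`, `N = A/Ax`, under assumptions (4), (5), (6),
the image of `Ax` in `M` is a simple submodule meeting every nonzero submodule of `M`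
nontrivially; in particular `M` is a finitely generated monolithic non-artinian module. -/
theorem essential_extension_construction {K A : Type*} [Field K] [Ring A] [Algebra K A]
    [IsNoetherianRing A] [NoZeroDivisors A]
    (w : A) (σ : A ≃+* A) (hw : ∀ y : A, w * y = σ y * w)
    (J : Ideal A) (hJ : J.IsMaximal)
    (μ : K) (hμ : μ ≠ 0) (hwJ : w - algebraMap K A μ ∈ J)
    (x : A) (hx : ¬ IsUnit x)
    -- assumption (4)
    (h4 : ∀ m : ℕ, ¬ ∃ a : A, (σ ^ m) x * a - 1 ∈ J)
    -- assumption (5): the chain N ⊋ wN ⊋ w²N ⊋ … is strictly descending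
    (h5 : ∀ m : ℕ,
      Submodule.map (Submodule.span A {x}).mkQ (Ideal.span {w ^ (m + 1)}) <
        Submodule.map (Submodule.span A {x}).mkQ (Ideal.span {w ^ m}))
    -- assumption (6): every nonzero submodule of N contains w^m N for some m
    (h6 : ∀ U : Submodule A (A ⧸ (Submodule.span A {x} : Submodule A A)), U ≠ ⊥ →
      ∃ m : ℕ, Submodule.map (Submodule.span A {x}).mkQ (Ideal.span {w ^ m}) ≤ U) :
    IsSimpleModule A
      ↥(Submodule.map (Submodule.map (LinearMap.toSpanSingleton A A x) J).mkQ
          (Submodule.span A {x})) ∧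
    (∀ U : Submodule A (A ⧸ (Submodule.map (LinearMap.toSpanSingleton A A x) J)), U ≠ ⊥ →
      (Submodule.map (Submodule.map (LinearMap.toSpanSingleton A A x) J).mkQ
          (Submodule.span A {x})) ⊓ U ≠ ⊥) ∧
    Module.Finite A (A ⧸ (Submodule.map (LinearMap.toSpanSingleton A A x) J)) ∧
    IsMonolithic A (A ⧸ (Submodule.map (LinearMap.toSpanSingleton A A x) J)) ∧
    ¬ IsArtinian A (A ⧸ (Submodule.map (LinearMap.toSpanSingleton A A x) J)) := by
  
  -- notation
  set I : Submodule A A := Submodule.map (LinearMap.toSpanSingleton A A x) J with hIdef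
  set Sx : Submodule A A := Submodule.span A {x} with hSxdef
  set L : Submodule A (A ⧸ I) := Submodule.map I.mkQ Sx with hLdef
  -- w^m commutes past elements via σ^m
  have hww : ∀ (m : ℕ) (y : A), w ^ m * y = (σ ^ m) y * w ^ m := by
    intro m
    induction m with
    | zero => intro y; simp
    | succ n ih =>
      intro y
      have hp : (σ ^ (n+1)) y = σ ((σ ^ n) y) := by rw [pow_succ']; rfl
      rw [pow_succ', mul_assoc, ih y, ← mul_assoc, hw, hp, mul_assoc]
  -- powers of w are congruent to powers of μ mod J
  have hwpow : ∀ m : ℕ, w ^ m - algebraMap K A (μ ^ m) ∈ J := by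
    intro m
    induction m with
    | zero => simp
    | succ n ih =>
      have key : w ^ (n+1) - algebraMap K A (μ ^ (n+1)) =
          w ^ n * (w - algebraMap K A μ) +
          algebraMap K A μ * (w ^ n - algebraMap K A (μ ^ n)) := by
        have hc : algebraMap K A μ * w ^ n = w ^ n * algebraMap K A μ :=
          Algebra.commutes μ (w ^ n)
        rw [pow_succ, pow_succ', map_mul, mul_sub, mul_sub, hc]
        abel
      rw [key]
      exact J.add_mem (J.mul_mem_left _ hwJ) (J.mul_mem_left _ ih)
  have hspan_top : ∀ u : A, IsUnit u → Ideal.span {u} = (⊤ : Ideal A) := by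
    intro u hu
    rw [eq_top_iff]
    intro y _
    obtain ⟨v, hv⟩ := hu.exists_left_inv
    have hy : y = (y * v) • u := by rw [smul_eq_mul, mul_assoc, hv, mul_one]
    rw [hy]
    exact Submodule.smul_mem _ _ (Ideal.subset_span rfl)
  have hJne : J ≠ ⊥ := by
    intro h
    have hwu : IsUnit w := by
      have : w = algebraMap K A μ := by
        have := hwJ; rw [h] at this
        simpa [sub_eq_zero] using this
      rw [this]
      exact (isUnit_iff_ne_zero.mpr hμ).map (algebraMap K A)
    have h0 := h5 0
    have e1 : Ideal.span {w ^ (0 + 1)} = (⊤ : Ideal A) := hspan_top _ (by simpa using hwu)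
    have e0 : Ideal.span {w ^ 0} = (⊤ : Ideal A) := hspan_top _ (by simp)
    rw [e0, e1] at h0
    exact lt_irrefl _ h0
  have hx0 : x ≠ 0 := by
    intro h
    subst h
    have hsp : (Submodule.span A {(0:A)} : Submodule A A) = ⊥ := Submodule.span_zero_singleton A
    obtain ⟨j, hjJ, hj0⟩ := (Submodule.ne_bot_iff _).mp hJne
    set U : Submodule A (A ⧸ (Submodule.span A {(0:A)} : Submodule A A)) :=
      Submodule.map (Submodule.span A {(0:A)}).mkQ J with hUdef
    have hUne : U ≠ ⊥ := by
      rw [Submodule.ne_bot_iff]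
      refine ⟨(Submodule.span A {(0:A)}).mkQ j, Submodule.mem_map_of_mem hjJ, ?_⟩
      intro h0
      rw [Submodule.mkQ_apply, Submodule.Quotient.mk_eq_zero, hsp, Submodule.mem_bot] at h0
      exact hj0 h0
    obtain ⟨m, hm⟩ := h6 U hUne
    have hmem : (Submodule.span A {(0:A)}).mkQ (w ^ m) ∈ U :=
      hm (Submodule.mem_map_of_mem (Ideal.subset_span rfl))
    obtain ⟨j', hj'J, hj'⟩ := hmem
    have : w ^ m ∈ J := by
      have : j' - w ^ m ∈ (Submodule.span A {(0:A)} : Submodule A A) := by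
        rw [← Submodule.Quotient.eq]
        exact hj'
      rw [hsp, Submodule.mem_bot, sub_eq_zero] at this
      rwa [← this]
    have hμm : algebraMap K A (μ ^ m) ∈ J := by
      have := J.sub_mem this (hwpow m)
      simpa using this
    exact hJ.ne_top (J.eq_top_of_isUnit_mem hμm
      ((isUnit_iff_ne_zero.mpr (pow_ne_zero m hμ)).map (algebraMap K A)))
  -- basic membership facts
  have hIle : I ≤ Sx := by
    rintro _ ⟨j, hj, rfl⟩
    rw [LinearMap.toSpanSingleton_apply]
    exact Submodule.smul_mem _ j (Submodule.mem_span_singleton_self x)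
  -- the connecting map π : A/I → A/Ax
  set π : (A ⧸ I) →ₗ[A] (A ⧸ Sx) :=
    Submodule.mapQ I Sx LinearMap.id (by simpa using hIle) with hπdef
  have hπ : ∀ a : A, π (I.mkQ a) = Sx.mkQ a := by
    intro a
    rw [hπdef, Submodule.mkQ_apply, Submodule.mapQ_apply]
    rfl
  have hkerπ : ∀ u : A ⧸ I, π u = 0 → u ∈ L := by
    intro u hu
    obtain ⟨a, rfl⟩ := I.mkQ_surjective u
    rw [hπ a, Submodule.mkQ_apply, Submodule.Quotient.mk_eq_zero] at hu
    exact Submodule.mem_map_of_mem hu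
  -- x*stuff ∈ I iff stuff ∈ J (cancellation)
  have hcancel : ∀ a : A, a * x ∈ I → a ∈ J := by
    rintro a ⟨j, hj, hja⟩
    rw [LinearMap.toSpanSingleton_apply, smul_eq_mul] at hja
    rwa [← mul_right_cancel₀ hx0 hja]
  -- the essentiality core
  have hcore : ∀ U : Submodule A (A ⧸ I), U ≠ ⊥ → L ⊓ U ≠ ⊥ := by
    intro U hU hLU
    set V : Submodule A (A ⧸ Sx) := Submodule.map π U with hVdef
    have hV : V ≠ ⊥ := by
      intro hV0
      apply hU
      rw [eq_bot_iff]
      intro u huU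
      have hπu : π u = 0 := by
        have : π u ∈ V := Submodule.mem_map_of_mem huU
        rw [hV0] at this
        simpa using this
      have : u ∈ L ⊓ U := ⟨hkerπ u hπu, huU⟩
      rw [hLU] at this
      simpa using this
    obtain ⟨m, hm⟩ := h6 V hV
    have hmem : Sx.mkQ (w ^ m) ∈ V :=
      hm (Submodule.mem_map_of_mem (Ideal.subset_span rfl))
    obtain ⟨u, huU, hu⟩ := hmem
    obtain ⟨a, rfl⟩ := I.mkQ_surjective u
    rw [hπ a] at hu
    have : a - w ^ m ∈ Sx := by rw [← Submodule.Quotient.eq]; exact hu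
    obtain ⟨b, hb⟩ := Submodule.mem_span_singleton.mp this
    have ha : a = w ^ m + b * x := by
      rw [smul_eq_mul] at hb
      exact sub_eq_iff_eq_add'.mp hb.symm
    set c : A := (σ ^ m) x with hcdef
    have hca : c * a = (w ^ m + c * b) * x := by
      rw [ha, mul_add, ← mul_assoc, add_mul, ← hww m x, mul_assoc]
    have hcuU : I.mkQ (c * a) ∈ U := by
      have h' := U.smul_mem c huU
      have heq : c • I.mkQ a = I.mkQ (c * a) := by
        rw [Submodule.mkQ_apply, Submodule.mkQ_apply, ← Submodule.Quotient.mk_smul, smul_eq_mul]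
      rwa [heq] at h'
    have hcuL : I.mkQ (c * a) ∈ L := by
      apply Submodule.mem_map_of_mem
      rw [hca]
      exact Submodule.smul_mem _ _ (Submodule.mem_span_singleton_self x)
    have hzero : I.mkQ (c * a) = 0 := by
      have : I.mkQ (c * a) ∈ L ⊓ U := ⟨hcuL, hcuU⟩
      rw [hLU] at this
      simpa using this
    rw [Submodule.mkQ_apply, Submodule.Quotient.mk_eq_zero, hca] at hzero
    have hj1 : w ^ m + c * b ∈ J := hcancel _ hzero
    -- derive contradiction with h4
    apply h4 m
    set ν : A := algebraMap K A (μ⁻¹ ^ m) with hνdef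
    refine ⟨-(ν * b), ?_⟩
    have hνc : c * ν = ν * c := (Algebra.commutes _ _).symm
    have hνμ : ν * algebraMap K A (μ ^ m) = 1 := by
      rw [hνdef, ← map_mul, ← mul_pow, inv_mul_cancel₀ hμ, one_pow, map_one]
    have key : c * -(ν * b) - 1 =
        -(ν * ((w ^ m + c * b) - (w ^ m - algebraMap K A (μ ^ m)))) := by
      have expand : (w ^ m + c * b) - (w ^ m - algebraMap K A (μ ^ m)) =
          c * b + algebraMap K A (μ ^ m) := by abel
      rw [expand, mul_add, hνμ, neg_add, ← mul_assoc, ← hνc, mul_assoc, mul_neg,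
        sub_eq_add_neg]
    rw [key]
    exact J.neg_mem (J.mul_mem_left ν (J.sub_mem hj1 (hwpow m)))
  -- simplicity of L
  have hsimple : IsSimpleModule A L := by
    set f : A →ₗ[A] (A ⧸ I) := I.mkQ.comp (LinearMap.toSpanSingleton A A x) with hfdef
    have hfx : ∀ a : A, f a = I.mkQ (a * x) := by
      intro a
      rw [hfdef, LinearMap.comp_apply, LinearMap.toSpanSingleton_apply, smul_eq_mul]
    have hker : LinearMap.ker f = J := by
      ext a
      rw [LinearMap.mem_ker, hfx, Submodule.mkQ_apply, Submodule.Quotient.mk_eq_zero]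
      constructor
      · exact hcancel a
      · intro haJ
        exact ⟨a, haJ, by rw [LinearMap.toSpanSingleton_apply, smul_eq_mul]⟩
    have hrange : LinearMap.range f = L := by
      rw [hfdef, LinearMap.range_comp, ← LinearMap.span_singleton_eq_range]
    haveI : IsSimpleModule A (A ⧸ J) := isSimpleModule_iff_isCoatom.mpr (Ideal.isMaximal_def.mp hJ)
    have e : (A ⧸ J) ≃ₗ[A] L :=
      (Submodule.quotEquivOfEq J (LinearMap.ker f) hker.symm).trans
        ((f.quotKerEquivRange).trans (LinearEquiv.ofEq _ _ hrange))
    exact IsSimpleModule.congr e.symm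
  have hatom : IsAtom L := isSimpleModule_iff_isAtom.mp hsimple
  have hLle : ∀ U : Submodule A (A ⧸ I), U ≠ ⊥ → L ≤ U := by
    intro U hU
    have h1 := hcore U hU
    have h2 : L ⊓ U ≤ L := inf_le_left
    rcases lt_or_eq_of_le h2 with h | h
    · exact absurd (hatom.2 _ h) h1
    · rw [← h]; exact inf_le_right
  refine ⟨hsimple, hcore, ?_, ?_, ?_⟩
  · exact Module.Finite.of_surjective I.mkQ I.mkQ_surjective
  · -- monolithic
    intro hbot
    apply hatom.1
    rw [eq_bot_iff, ← hbot]
    exact le_sInf fun U hU => hLle U hU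
  · -- non-artinian
    intro hart
    haveI := hart
    haveI : IsArtinian A (A ⧸ Sx) := isArtinian_of_surjective _ π (by
      intro n
      obtain ⟨a, rfl⟩ := Sx.mkQ_surjective n
      exact ⟨I.mkQ a, hπ a⟩)
    set g : ℕ → Submodule A (A ⧸ Sx) := fun m => Submodule.map Sx.mkQ (Ideal.span {w ^ m}) with hg
    have hanti : ∀ n m : ℕ, n ≤ m → g m ≤ g n := fun n m h =>
      (antitone_nat_of_succ_le fun k => (h5 k).le) h
    obtain ⟨n, hn⟩ := IsArtinian.monotone_stabilizes
      (⟨fun m => OrderDual.toDual (g m), fun n m h => hanti n m h⟩ :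
        ℕ →o (Submodule A (A ⧸ Sx))ᵒᵈ)
    have := hn (n + 1) (Nat.le_succ n)
    exact (h5 n).ne this.symm
end

section
/- Let K be a field and q ∈ K a nonzero element that is not a root of unity. Let A = K⟨a,b⟩/(ab − q·ba) be the coordinate ring of the quantum plane, let σ be the K-algebra automorphism of A with σ(a) = q⁻¹a and σ(b) = qb, let J = A(ab − 1) and x = a − 1. Then J is a maximal left ideal of A, and for every m ≥ 0 there is no z ∈ A with σ^m(x)·z − 1 ∈ J. -/
noncomputable section

/-- The defining relation `ab = q·ba` of the coordinate ring of the quantum plane,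
as a relation on the free algebra on two generators. -/
def qpRel (K : Type*) [Field K] (q : K) :
    FreeAlgebra K (Fin 2) → FreeAlgebra K (Fin 2) → Prop := fun X Y =>
  X = FreeAlgebra.ι K (0 : Fin 2) * FreeAlgebra.ι K (1 : Fin 2) ∧
  Y = q • (FreeAlgebra.ι K (1 : Fin 2) * FreeAlgebra.ι K (0 : Fin 2))

/-- The coordinate ring of the quantum plane `K⟨a,b⟩/(ab − q·ba)`. -/
abbrev QuantumPlane (K : Type*) [Field K] (q : K) := RingQuot (qpRel K q)

/-- The generator `a` of the quantum plane. -/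
def qpA (K : Type*) [Field K] (q : K) : QuantumPlane K q :=
  RingQuot.mkAlgHom K (qpRel K q) (FreeAlgebra.ι K (0 : Fin 2))

/-- The generator `b` of the quantum plane. -/
def qpB (K : Type*) [Field K] (q : K) : QuantumPlane K q :=
  RingQuot.mkAlgHom K (qpRel K q) (FreeAlgebra.ι K (1 : Fin 2))

namespace QP
variable {K : Type*} [Field K] {q : K}

theorem ab_eq : qpA K q * qpB K q = q • (qpB K q * qpA K q) := by
  have h := RingQuot.mkAlgHom_rel K (s := qpRel K q)
    (x := FreeAlgebra.ι K (0 : Fin 2) * FreeAlgebra.ι K (1 : Fin 2))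
    (y := q • (FreeAlgebra.ι K (1 : Fin 2) * FreeAlgebra.ι K (0 : Fin 2))) ⟨rfl, rfl⟩
  simpa [qpA, qpB, map_mul, map_smul] using h

theorem adjoin_ab : Algebra.adjoin K {qpA K q, qpB K q} = ⊤ := by
  have h1 : Algebra.adjoin K
      (Set.range fun i : Fin 2 => (RingQuot.mkAlgHom K (qpRel K q)) (FreeAlgebra.ι K i)) = ⊤ := by
    rw [show (Set.range fun i : Fin 2 => (RingQuot.mkAlgHom K (qpRel K q)) (FreeAlgebra.ι K i))
        = (RingQuot.mkAlgHom K (qpRel K q)) '' (Set.range (FreeAlgebra.ι K)) by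
      rw [← Set.range_comp]; rfl]
    rw [← AlgHom.map_adjoin, FreeAlgebra.adjoin_range_ι, Algebra.map_top,
      (AlgHom.range_eq_top _).mpr (RingQuot.mkAlgHom_surjective K (qpRel K q))]
  have h2 : (Set.range fun i : Fin 2 => (RingQuot.mkAlgHom K (qpRel K q)) (FreeAlgebra.ι K i))
      = {qpA K q, qpB K q} := by
    ext x
    simp only [Set.mem_range, Set.mem_insert_iff, Set.mem_singleton_iff]
    constructor
    · rintro ⟨i, rfl⟩
      fin_cases i
      · left; rfl
      · right; rfl
    · rintro (rfl | rfl)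
      exacts [⟨0, rfl⟩, ⟨1, rfl⟩]
  rw [← h2, h1]

abbrev V (K : Type*) [Field K] := ℤ →₀ K

variable (K) in
def Aop : V K →ₗ[K] V K := Finsupp.lmapDomain K K (· + 1)

variable (K q) in
def Bop : V K →ₗ[K] V K :=
  Finsupp.lsum K fun n => (q ^ (-n) : K) • Finsupp.lsingle (n - 1)

@[simp] theorem Aop_single (n : ℤ) (k : K) :
    Aop K (Finsupp.single n k) = Finsupp.single (n + 1) k := by
  rw [Aop, Finsupp.lmapDomain_apply, Finsupp.mapDomain_single]

@[simp] theorem Bop_single (n : ℤ) (k : K) :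
    Bop K q (Finsupp.single n k) = q ^ (-n) • Finsupp.single (n - 1) k := by
  rw [Bop, Finsupp.lsum_single, LinearMap.smul_apply, Finsupp.lsingle_apply]

variable (K q) in
theorem AB_rel (hq0 : q ≠ 0) :
    (Aop K) ∘ₗ (Bop K q) = q • ((Bop K q) ∘ₗ (Aop K)) := by
  refine Finsupp.lhom_ext fun n k => ?_
  simp only [LinearMap.comp_apply, LinearMap.smul_apply, Aop_single, Bop_single,
    map_smul, neg_add, Finsupp.smul_single, sub_add_cancel, add_sub_cancel_right]
  congr 1
  simp only [smul_eq_mul]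
  rw [← mul_assoc, mul_comm q, ← zpow_add_one₀ hq0]
  norm_num

variable (K q) in
/-- The representation of the quantum plane on `V = K[ℤ]`. -/
def rho (hq0 : q ≠ 0) : QuantumPlane K q →ₐ[K] Module.End K (V K) :=
  RingQuot.liftAlgHom K ⟨FreeAlgebra.lift K ![Aop K, Bop K q], by
    rintro x y ⟨rfl, rfl⟩
    simp only [map_mul, map_smul, FreeAlgebra.lift_ι_apply]
    show (Aop K) * (Bop K q) = q • ((Bop K q) * (Aop K))
    exact AB_rel K q hq0⟩

variable (hq0 : q ≠ 0)

@[simp] theorem rho_a : rho K q hq0 (qpA K q) = Aop K := by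
  rw [qpA, rho, RingQuot.liftAlgHom_mkAlgHom_apply, FreeAlgebra.lift_ι_apply]
  rfl

@[simp] theorem rho_b : rho K q hq0 (qpB K q) = Bop K q := by
  rw [qpB, rho, RingQuot.liftAlgHom_mkAlgHom_apply, FreeAlgebra.lift_ι_apply]
  rfl


section Ring
variable (K q) in
/-- `sgen n` is `a^n` for `n ≥ 0` and `b^{-n}` for `n < 0`. -/
def sgen (n : ℤ) : QuantumPlane K q :=
  if 0 ≤ n then qpA K q ^ n.toNat else qpB K q ^ (-n).toNat

variable (K q) in
def Jid : Ideal (QuantumPlane K q) := Ideal.span {qpA K q * qpB K q - 1}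

theorem g_mem : qpA K q * qpB K q - 1 ∈ Jid K q := Ideal.subset_span rfl

theorem J_mul {x : QuantumPlane K q} (r : QuantumPlane K q) (hx : x ∈ Jid K q) :
    r * x ∈ Jid K q := (Jid K q).smul_mem r hx

theorem J_smul {x : QuantumPlane K q} (k : K) (hx : x ∈ Jid K q) :
    k • x ∈ Jid K q := by
  rw [Algebra.smul_def]
  exact J_mul _ hx

theorem a_mul_bpow (j : ℕ) :
    qpA K q * qpB K q ^ j = q ^ j • (qpB K q ^ j * qpA K q) := by
  induction j with
  | zero => simp
  | succ j ih =>
    rw [pow_succ, pow_succ, ← mul_assoc]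
    calc qpA K q * qpB K q ^ j * qpB K q
        = (q ^ j • (qpB K q ^ j * qpA K q)) * qpB K q := by rw [ih]
      _ = q ^ j • (qpB K q ^ j * (qpA K q * qpB K q)) := by rw [smul_mul_assoc, mul_assoc]
      _ = q ^ j • (qpB K q ^ j * (q • (qpB K q * qpA K q))) := by rw [ab_eq]
      _ = (q ^ j * q) • (qpB K q ^ j * qpB K q * qpA K q) := by
          rw [mul_smul_comm, smul_smul, mul_comm (q^j) q, mul_assoc]

include hq0 in
theorem b_mul_apow (n : ℕ) :
    qpB K q * qpA K q ^ n = (q ^ n)⁻¹ • (qpA K q ^ n * qpB K q) := by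
  induction n with
  | zero => simp
  | succ n ih =>
    have hba : qpB K q * qpA K q = q⁻¹ • (qpA K q * qpB K q) := by
      rw [ab_eq, smul_smul, inv_mul_cancel₀ hq0, one_smul]
    rw [pow_succ, pow_succ, ← mul_assoc]
    calc qpB K q * qpA K q ^ n * qpA K q
        = ((q ^ n)⁻¹ • (qpA K q ^ n * qpB K q)) * qpA K q := by rw [ih]
      _ = (q ^ n)⁻¹ • (qpA K q ^ n * (qpB K q * qpA K q)) := by rw [smul_mul_assoc, mul_assoc]
      _ = (q ^ n)⁻¹ • (qpA K q ^ n * (q⁻¹ • (qpA K q * qpB K q))) := by rw [hba]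
      _ = ((q ^ n)⁻¹ * q⁻¹) • (qpA K q ^ n * qpA K q * qpB K q) := by
          rw [mul_smul_comm, smul_smul, mul_assoc]
      _ = (q ^ n * q)⁻¹ • (qpA K q ^ n * qpA K q * qpB K q) := by rw [mul_inv]

-- `a^{m+1} b ≡ a^m`
theorem apow_mul_b (m : ℕ) :
    qpA K q ^ (m + 1) * qpB K q - qpA K q ^ m ∈ Jid K q := by
  have : qpA K q ^ (m + 1) * qpB K q - qpA K q ^ m
      = qpA K q ^ m * (qpA K q * qpB K q - 1) := by
    rw [mul_sub, mul_one, pow_succ, mul_assoc]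
  rw [this]
  exact J_mul _ g_mem

-- `a b^{j+1} ≡ q^j b^j`
theorem a_mul_bpow_mem (j : ℕ) :
    qpA K q * qpB K q ^ (j + 1) - q ^ j • qpB K q ^ j ∈ Jid K q := by
  have key : qpA K q * qpB K q ^ (j + 1) - q ^ j • qpB K q ^ j
      = q ^ j • (qpB K q ^ j * (qpA K q * qpB K q - 1)) := by
    rw [mul_sub, mul_one, smul_sub]
    congr 1
    rw [a_mul_bpow (j + 1), ab_eq, mul_smul_comm, smul_smul, ← mul_assoc, ← pow_succ, pow_succ (qpB K q)]
  rw [key]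
  exact J_smul _ (J_mul _ g_mem)

include hq0 in
-- `b a^{m+1} ≡ (q^{m+1})⁻¹ a^m`
theorem b_mul_apow_mem (m : ℕ) :
    qpB K q * qpA K q ^ (m + 1) - (q ^ (m + 1))⁻¹ • qpA K q ^ m ∈ Jid K q := by
  have key : qpB K q * qpA K q ^ (m + 1) - (q ^ (m + 1))⁻¹ • qpA K q ^ m
      = (q ^ (m + 1))⁻¹ • (qpA K q ^ (m + 1) * qpB K q - qpA K q ^ m) := by
    rw [smul_sub, b_mul_apow hq0]
  rw [key]
  exact J_smul _ (apow_mul_b m)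

include hq0 in
-- `(ab) a^m ≡ (q^m)⁻¹ a^m`
theorem w_mul_apow_mem (m : ℕ) :
    (qpA K q * qpB K q) * qpA K q ^ m - (q ^ m)⁻¹ • qpA K q ^ m ∈ Jid K q := by
  have key : (qpA K q * qpB K q) * qpA K q ^ m - (q ^ m)⁻¹ • qpA K q ^ m
      = (q ^ m)⁻¹ • (qpA K q ^ m * (qpA K q * qpB K q - 1)) := by
    rw [mul_sub, mul_one, smul_sub]
    congr 1
    rw [mul_assoc, b_mul_apow hq0, mul_smul_comm]
    congr 1
    rw [← mul_assoc, ← mul_assoc, ← pow_succ, ← pow_succ']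
  rw [key]
  exact J_smul _ (J_mul _ g_mem)

-- `(ab) b^j ≡ q^j b^j`
theorem w_mul_bpow_mem (j : ℕ) :
    (qpA K q * qpB K q) * qpB K q ^ j - q ^ j • qpB K q ^ j ∈ Jid K q := by
  have : (qpA K q * qpB K q) * qpB K q ^ j = qpA K q * qpB K q ^ (j + 1) := by
    rw [mul_assoc, ← pow_succ']
  rw [this]
  exact a_mul_bpow_mem j

@[simp] theorem sgen_zero : sgen K q 0 = 1 := by simp [sgen]

theorem sgen_nonneg {n : ℤ} (hn : 0 ≤ n) : sgen K q n = qpA K q ^ n.toNat := if_pos hn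

theorem sgen_neg {n : ℤ} (hn : n < 0) : sgen K q n = qpB K q ^ (-n).toNat :=
  if_neg (by omega)

theorem sgen_nonpos {n : ℤ} (hn : n ≤ 0) : sgen K q n = qpB K q ^ (-n).toNat := by
  rcases lt_or_eq_of_le hn with h | h
  · exact sgen_neg h
  · subst h; simp [sgen]

include hq0 in
theorem a_sgen (n : ℤ) : ∃ c : K, c ≠ 0 ∧
    qpA K q * sgen K q n - c • sgen K q (n + 1) ∈ Jid K q := by
  rcases le_or_gt 0 n with hn | hn
  · refine ⟨1, one_ne_zero, ?_⟩
    rw [sgen_nonneg hn, sgen_nonneg (by omega), one_smul,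
      show (n + 1).toNat = n.toNat + 1 by omega, pow_succ', sub_self]
    exact zero_mem _
  · set j : ℕ := (-(n + 1)).toNat with hj
    refine ⟨q ^ j, pow_ne_zero _ hq0, ?_⟩
    rw [sgen_neg hn, sgen_nonpos (by omega), show (-n).toNat = j + 1 by omega,
      show (-(n+1)).toNat = j from rfl]
    exact a_mul_bpow_mem j

include hq0 in
theorem b_sgen (n : ℤ) : ∃ c : K, c ≠ 0 ∧
    qpB K q * sgen K q n - c • sgen K q (n - 1) ∈ Jid K q := by
  rcases le_or_gt 1 n with hn | hn
  · set m : ℕ := (n - 1).toNat with hm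
    refine ⟨(q ^ (m + 1))⁻¹, inv_ne_zero (pow_ne_zero _ hq0), ?_⟩
    rw [sgen_nonneg (by omega), sgen_nonneg (by omega),
      show n.toNat = m + 1 by omega, show (n - 1).toNat = m from rfl]
    exact b_mul_apow_mem hq0 m
  · refine ⟨1, one_ne_zero, ?_⟩
    rw [sgen_nonpos (by omega), sgen_neg (by omega), one_smul,
      show (-(n-1)).toNat = (-n).toNat + 1 by omega, pow_succ', sub_self]
    exact zero_mem _

include hq0 in
theorem w_sgen (n : ℤ) :
    (qpA K q * qpB K q) * sgen K q n - (q ^ (-n) : K) • sgen K q n ∈ Jid K q := by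
  rcases le_or_gt 0 n with hn | hn
  · rw [sgen_nonneg hn, show (q ^ (-n) : K) = (q ^ n.toNat)⁻¹ by
      rw [zpow_neg, ← zpow_natCast, Int.toNat_of_nonneg hn]]
    exact w_mul_apow_mem hq0 n.toNat
  · rw [sgen_neg hn, show (q ^ (-n) : K) = q ^ (-n).toNat by
      rw [← zpow_natCast, Int.toNat_of_nonneg (by omega)]]
    exact w_mul_bpow_mem ((-n).toNat)

/-! ### evaluation at the vacuum vector -/

theorem rho_J {x : QuantumPlane K q} (hx : x ∈ Jid K q) :
    rho K q hq0 x (Finsupp.single 0 1) = 0 := by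
  rw [Jid, Ideal.span, Submodule.mem_span_singleton] at hx
  obtain ⟨y, rfl⟩ := hx
  rw [smul_eq_mul, map_mul]
  have hg : rho K q hq0 (qpA K q * qpB K q - 1) (Finsupp.single 0 1) = 0 := by
    rw [map_sub, map_mul, map_one, rho_a, rho_b]
    simp only [LinearMap.sub_apply, Module.End.one_apply, Module.End.mul_apply, Bop_single,
      neg_zero, zpow_zero, one_smul, Aop_single]
    rw [show (0:ℤ) - 1 + 1 = 0 by ring, sub_self]
  show rho K q hq0 y (rho K q hq0 _ (Finsupp.single 0 1)) = 0
  rw [hg, map_zero]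

theorem Aop_pow (m : ℕ) (p : ℤ) (k : K) :
    ((Aop K) ^ m) (Finsupp.single p k) = Finsupp.single (p + m) k := by
  induction m generalizing p with
  | zero => simp
  | succ m ih =>
    rw [pow_succ, Module.End.mul_apply, Aop_single, ih]
    congr 1
    push_cast; ring

include hq0 in
theorem Bop_pow (j : ℕ) : ∃ μ : K, μ ≠ 0 ∧
    ((Bop K q) ^ j) (Finsupp.single 0 1) = μ • Finsupp.single (-(j:ℤ)) 1 := by
  induction j with
  | zero => exact ⟨1, one_ne_zero, by simp⟩
  | succ j ih =>
    obtain ⟨μ, hμ, hB⟩ := ih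
    refine ⟨μ * q ^ (j:ℤ), mul_ne_zero hμ (zpow_ne_zero _ hq0), ?_⟩
    rw [pow_succ', Module.End.mul_apply, hB, map_smul, Bop_single, neg_neg, smul_smul]
    rw [show -(j:ℤ) - 1 = -((j:ℕ)+1:ℕ) by push_cast; ring]

include hq0 in
theorem rho_sgen (n : ℤ) : ∃ lam : K, lam ≠ 0 ∧
    rho K q hq0 (sgen K q n) (Finsupp.single 0 1) = lam • Finsupp.single n 1 := by
  rcases le_or_gt 0 n with hn | hn
  · refine ⟨1, one_ne_zero, ?_⟩
    rw [sgen_nonneg hn, map_pow, rho_a, Aop_pow, one_smul, zero_add,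
      Int.toNat_of_nonneg hn]
  · obtain ⟨μ, hμ, hB⟩ := Bop_pow (q := q) hq0 (-n).toNat
    refine ⟨μ, hμ, ?_⟩
    rw [sgen_neg hn, map_pow, rho_b, hB, Int.toNat_of_nonneg (by omega), neg_neg]

include hq0 in
/-- Every element is congruent mod `J` to a `K`-linear combination of the `sgen n`. -/
theorem sgen_span (y : QuantumPlane K q) : ∃ f : ℤ →₀ K,
    y - (f.sum fun n k => k • sgen K q n) ∈ Jid K q := by
  set T : Submodule K (QuantumPlane K q) :=
    Submodule.span K (Set.range (sgen K q) ∪ (Jid K q : Set (QuantumPlane K q))) with hT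
  have hJT : ∀ x ∈ Jid K q, x ∈ T :=
    fun x hx => Submodule.subset_span (Set.mem_union_right _ hx)
  have hsT : ∀ n : ℤ, sgen K q n ∈ T :=
    fun n => Submodule.subset_span (Set.mem_union_left _ ⟨n, rfl⟩)
  have hgen : ∀ r ∈ ({qpA K q, qpB K q} : Set (QuantumPlane K q)),
      ∀ x ∈ T, r * x ∈ T := by
    rintro r hr
    have key : ∀ s : ℤ → K, (∀ n, s n ≠ 0) →
        (∀ n : ℤ, ∃ d : ℤ, r * sgen K q n - s n • sgen K q d ∈ Jid K q) →
        ∀ x ∈ T, r * x ∈ T := by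
      intro s hs hmod x hx
      induction hx using Submodule.span_induction with
      | mem x hx =>
        rcases hx with ⟨n, rfl⟩ | hx
        · obtain ⟨d, hd⟩ := hmod n
          have : r * sgen K q n = (r * sgen K q n - s n • sgen K q d) + s n • sgen K q d := by
            rw [sub_add_cancel]
          rw [this]
          exact T.add_mem (hJT _ hd) (T.smul_mem _ (hsT d))
        · exact hJT _ (J_mul r hx)
      | zero => rw [mul_zero]; exact T.zero_mem
      | add x y _ _ hx hy => rw [mul_add]; exact T.add_mem hx hy
      | smul k x _ hx => rw [mul_smul_comm]; exact T.smul_mem k hx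
    rcases hr with rfl | rfl
    · exact key (fun n => Classical.choose (a_sgen hq0 n))
        (fun n => (Classical.choose_spec (a_sgen hq0 n)).1)
        (fun n => ⟨n + 1, (Classical.choose_spec (a_sgen hq0 n)).2⟩)
    · exact key (fun n => Classical.choose (b_sgen hq0 n))
        (fun n => (Classical.choose_spec (b_sgen hq0 n)).1)
        (fun n => ⟨n - 1, (Classical.choose_spec (b_sgen hq0 n)).2⟩)
  have hmul : ∀ r : QuantumPlane K q, ∀ x ∈ T, r * x ∈ T := by
    intro r
    have hr : r ∈ Algebra.adjoin K ({qpA K q, qpB K q} : Set (QuantumPlane K q)) := by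
      rw [adjoin_ab]; trivial
    induction hr using Algebra.adjoin_induction with
    | mem x hx => exact hgen x hx
    | algebraMap k =>
      intro x hx
      rw [← Algebra.smul_def]
      exact T.smul_mem k hx
    | add x y _ _ hx hy =>
      intro z hz
      rw [add_mul]
      exact T.add_mem (hx z hz) (hy z hz)
    | mul x y _ _ hx hy =>
      intro z hz
      rw [mul_assoc]
      exact hx _ (hy z hz)
  have hyT : y ∈ T := by
    have := hmul y 1 (by simpa using hsT 0)
    simpa using this
  have hle : T ≤ Submodule.span K (Set.range (sgen K q)) ⊔
      (Jid K q).restrictScalars K := by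
    rw [hT, Submodule.span_le]
    rintro x (hx | hx)
    · exact Submodule.mem_sup_left (Submodule.subset_span hx)
    · exact Submodule.mem_sup_right hx
  obtain ⟨u, hu, v, hv, huv⟩ := Submodule.mem_sup.mp (hle hyT)
  obtain ⟨f, hf⟩ := Finsupp.mem_span_range_iff_exists_finsupp.mp hu
  exact ⟨f, by rw [hf, ← huv, add_sub_cancel_left]; exact hv⟩

include hq0 in
/-- the `sgen n` are independent mod `J`. -/
theorem sgen_indep {f : ℤ →₀ K}
    (hf : (f.sum fun n k => k • sgen K q n) ∈ Jid K q) : f = 0 := by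
  have h0 := rho_J hq0 hf
  rw [map_finsuppSum (rho K q hq0)] at h0
  rw [LinearMap.finsupp_sum_apply] at h0
  have h1 : (f.sum fun n k =>
      k • (rho K q hq0 (sgen K q n) (Finsupp.single 0 1))) = 0 := by
    rw [← h0]
    congr 1
    ext n k
    rw [map_smul]
    rfl
  ext m
  have h2 := congrArg (fun v : V K => v m) h1
  simp only [Finsupp.sum_apply, Finsupp.coe_zero, Pi.zero_apply] at h2
  have hside : ∀ n : ℤ, f n ≠ 0 → n ≠ m →
      (f n • (rho K q hq0 (sgen K q n) (Finsupp.single 0 1))) m = 0 := by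
    intro n _ hnm
    obtain ⟨lamn, hlamn, hvaln⟩ := rho_sgen hq0 n
    rw [hvaln]
    simp only [Finsupp.smul_apply, Finsupp.smul_single, Finsupp.single_apply]
    rw [if_neg hnm]
  rw [Finsupp.sum_eq_single m hside (fun _ => by simp)] at h2
  obtain ⟨lamm, hlamm, hvalm⟩ := rho_sgen hq0 m
  rw [hvalm] at h2
  simp only [Finsupp.smul_apply, Finsupp.smul_single, Finsupp.single_eq_same,
    smul_eq_mul, mul_one] at h2
  simp only [Finsupp.coe_zero, Pi.zero_apply]
  rcases mul_eq_zero.mp h2 with h | h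
  · exact h
  · exact absurd h hlamm

theorem zpow_ne_one (hq : ∀ n : ℕ, 0 < n → q ^ n ≠ 1) :
    ∀ m : ℤ, m ≠ 0 → q ^ m ≠ 1 := by
  intro m hm h1
  rcases lt_or_gt_of_ne hm with h | h
  · have : (q ^ (-m).toNat : K) = 1 := by
    -- q^m = 1 with m < 0
      have : ((q ^ (-m).toNat : K))⁻¹ = 1 := by
        rw [← zpow_natCast, Int.toNat_of_nonneg (by omega), ← zpow_neg, neg_neg, h1]
      rw [← inv_inv (q ^ (-m).toNat), this, inv_one]
    exact hq (-m).toNat (by omega) this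
  · refine hq m.toNat (by omega) ?_
    rw [← zpow_natCast, Int.toNat_of_nonneg (by omega), h1]

theorem eig_ne (hq0 : q ≠ 0) (hq : ∀ n : ℕ, 0 < n → q ^ n ≠ 1) {n k : ℤ} (h : n ≠ k) :
    (q ^ (-n) : K) ≠ q ^ (-k) := by
  intro he
  refine zpow_ne_one hq (k - n) (by omega) ?_
  rw [sub_eq_add_neg, zpow_add₀ hq0, he, ← zpow_add₀ hq0, add_neg_cancel, zpow_zero]

theorem chain (r x y z : QuantumPlane K q) (c c' : K) :
    r * (x - c • y) + c • (r * y - c' • z) = r * x - (c * c') • z := by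
  rw [mul_sub, smul_sub, mul_smul_comm, smul_smul]
  abel

include hq0 in
theorem isolate (F : Finset ℤ) : ∃ r : QuantumPlane K q, ∀ n : ℤ,
    r * sgen K q n - (∏ k ∈ F, ((q : K) ^ (-n) - q ^ (-k))) • sgen K q n ∈ Jid K q := by
  classical
  induction F using Finset.induction_on with
  | empty =>
    exact ⟨1, fun n => by simp⟩
  | insert _ _ hk =>
    rename_i k F ih
    obtain ⟨r, hr⟩ := ih
    refine ⟨r * (qpA K q * qpB K q - algebraMap K _ (q ^ (-k))), fun n => ?_⟩
    have step1 : (qpA K q * qpB K q - algebraMap K _ (q ^ (-k))) * sgen K q n -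
        ((q : K) ^ (-n) - q ^ (-k)) • sgen K q n ∈ Jid K q := by
      have : (qpA K q * qpB K q - algebraMap K _ (q ^ (-k))) * sgen K q n -
          ((q : K) ^ (-n) - q ^ (-k)) • sgen K q n
          = (qpA K q * qpB K q) * sgen K q n - (q ^ (-n) : K) • sgen K q n := by
        rw [sub_mul, ← Algebra.smul_def]
        module

      rw [this]
      exact w_sgen hq0 n
    have key : r * (qpA K q * qpB K q - algebraMap K _ (q ^ (-k))) * sgen K q n -
        (∏ j ∈ insert k F, ((q : K) ^ (-n) - q ^ (-j))) • sgen K q n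
        = r * ((qpA K q * qpB K q - algebraMap K _ (q ^ (-k))) * sgen K q n -
            ((q : K) ^ (-n) - q ^ (-k)) • sgen K q n)
          + ((q : K) ^ (-n) - q ^ (-k)) • (r * sgen K q n -
            (∏ j ∈ F, ((q : K) ^ (-n) - q ^ (-j))) • sgen K q n) := by
      rw [chain, Finset.prod_insert hk, mul_assoc]
    rw [key]
    exact (Jid K q).add_mem (J_mul _ step1) (J_smul _ (hr n))

include hq0 in
theorem shift_down (m : ℕ) (n : ℤ) : ∃ u : QuantumPlane K q, ∃ c : K, c ≠ 0 ∧
    u * sgen K q n - c • sgen K q (n - m) ∈ Jid K q := by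
  induction m with
  | zero => exact ⟨1, 1, one_ne_zero, by simp⟩
  | succ m ih =>
    obtain ⟨u, c, hc, hu⟩ := ih
    obtain ⟨c', hc', hb⟩ := b_sgen hq0 (n - m)
    refine ⟨qpB K q * u, c * c', mul_ne_zero hc hc', ?_⟩
    have key : (qpB K q * u) * sgen K q n - (c * c') • sgen K q (n - (m + 1 : ℕ))
        = qpB K q * (u * sgen K q n - c • sgen K q (n - m))
          + c • (qpB K q * sgen K q (n - m) - c' • sgen K q (n - m - 1)) := by
      rw [chain, mul_assoc,
        show (n - (m + 1 : ℕ) : ℤ) = n - m - 1 by push_cast; ring]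
    rw [key]
    exact (Jid K q).add_mem (J_mul _ hu) (J_smul _ hb)

include hq0 in
theorem shift_up (m : ℕ) (n : ℤ) : ∃ u : QuantumPlane K q, ∃ c : K, c ≠ 0 ∧
    u * sgen K q n - c • sgen K q (n + m) ∈ Jid K q := by
  induction m with
  | zero => exact ⟨1, 1, one_ne_zero, by simp⟩
  | succ m ih =>
    obtain ⟨u, c, hc, hu⟩ := ih
    obtain ⟨c', hc', ha⟩ := a_sgen hq0 (n + m)
    refine ⟨qpA K q * u, c * c', mul_ne_zero hc hc', ?_⟩
    have key : (qpA K q * u) * sgen K q n - (c * c') • sgen K q (n + (m + 1 : ℕ))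
        = qpA K q * (u * sgen K q n - c • sgen K q (n + m))
          + c • (qpA K q * sgen K q (n + m) - c' • sgen K q (n + m + 1)) := by
      rw [chain, mul_assoc,
        show (n + (m + 1 : ℕ) : ℤ) = n + m + 1 by push_cast; ring]
    rw [key]
    exact (Jid K q).add_mem (J_mul _ hu) (J_smul _ ha)

include hq0 in
theorem shift_to_zero (n : ℤ) : ∃ u : QuantumPlane K q, ∃ c : K, c ≠ 0 ∧
    u * sgen K q n - c • 1 ∈ Jid K q := by
  rcases le_or_gt 0 n with hn | hn
  · obtain ⟨u, c, hc, hu⟩ := shift_down hq0 n.toNat n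
    refine ⟨u, c, hc, ?_⟩
    rwa [show (n - n.toNat : ℤ) = 0 by omega, sgen_zero] at hu
  · obtain ⟨u, c, hc, hu⟩ := shift_up hq0 (-n).toNat n
    refine ⟨u, c, hc, ?_⟩
    rwa [show (n + (-n).toNat : ℤ) = 0 by omega, sgen_zero] at hu

theorem of_smul_mem {I : Ideal (QuantumPlane K q)} {c : K} (hc : c ≠ 0)
    {x : QuantumPlane K q} (h : c • x ∈ I) : x ∈ I := by
  have := I.smul_mem (algebraMap K _ c⁻¹) h
  rwa [smul_eq_mul, ← Algebra.smul_def, smul_smul, inv_mul_cancel₀ hc, one_smul] at this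

include hq0 in
theorem J_ne_top : Jid K q ≠ ⊤ := by
  intro h
  have h1 : (1 : QuantumPlane K q) ∈ Jid K q := by rw [h]; trivial
  have := rho_J hq0 h1
  rw [map_one] at this
  exact one_ne_zero (Finsupp.single_eq_zero.mp this)

include hq0 in
theorem J_maximal (hq : ∀ n : ℕ, 0 < n → q ^ n ≠ 1) : (Jid K q).IsMaximal := by
  classical
  rw [Ideal.isMaximal_def]
  constructor
  · exact J_ne_top hq0
  · intro I hI
    obtain ⟨y, hyI, hyJ⟩ := SetLike.exists_of_lt hI
    have hJI : Jid K q ≤ I := le_of_lt hI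
    obtain ⟨f, hfJ⟩ := sgen_span hq0 y
    have hf0 : f ≠ 0 := by
      rintro rfl
      exact hyJ (by simpa using hfJ)
    obtain ⟨n₀, hn₀⟩ := Finsupp.support_nonempty_iff.mpr hf0
    set F : Finset ℤ := f.support.erase n₀ with hF
    obtain ⟨r, hr⟩ := isolate hq0 F
    set g : ℤ → K := fun n => ∏ k ∈ F, ((q : K) ^ (-n) - q ^ (-k)) with hg
    have hgn₀ : g n₀ ≠ 0 := by
      refine Finset.prod_ne_zero_iff.mpr fun k hkF => ?_
      exact sub_ne_zero_of_ne (eig_ne hq0 hq (Ne.symm (Finset.ne_of_mem_erase hkF)))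
    have hfn₀ : f n₀ ≠ 0 := Finsupp.mem_support_iff.mp hn₀
    set c₀ : K := f n₀ * g n₀ with hc₀
    have hc₀0 : c₀ ≠ 0 := mul_ne_zero hfn₀ hgn₀
    -- S1 and S2
    set S1 : QuantumPlane K q := f.sum fun n k => k • (r * sgen K q n) with hS1
    set S2 : QuantumPlane K q := f.sum fun n k => (k * g n) • sgen K q n with hS2
    have e1 : r * (f.sum fun n k => k • sgen K q n) = S1 := by
      rw [Finsupp.mul_sum]
      exact Finsupp.sum_congr fun n _ => (mul_smul_comm _ _ _)
    have e2 : S1 - S2 ∈ Jid K q := by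
      rw [hS1, hS2, ← Finsupp.sum_sub]
      refine Submodule.sum_mem _ fun n _ => ?_
      show f n • (r * sgen K q n) - (f n * g n) • sgen K q n ∈ Jid K q
      have heq : f n • (r * sgen K q n) - (f n * g n) • sgen K q n
          = f n • (r * sgen K q n - g n • sgen K q n) := by
        rw [smul_sub, smul_smul]
      rw [heq]
      exact J_smul _ (hr n)
    have hside : ∀ n : ℤ, f n ≠ 0 → n ≠ n₀ → (f n * g n) • sgen K q n = 0 := by
      intro n hn hnn₀
      have hnF : n ∈ F := Finset.mem_erase.mpr ⟨hnn₀, Finsupp.mem_support_iff.mpr hn⟩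
      have hgz : g n = 0 := Finset.prod_eq_zero hnF (by rw [sub_self])
      rw [hgz, mul_zero, zero_smul]
    have e3 : S2 = c₀ • sgen K q n₀ := by
      rw [hS2, Finsupp.sum_eq_single n₀ hside (fun _ => by simp)]
    have hclaim : r * y - c₀ • sgen K q n₀ ∈ Jid K q := by
      have : r * y - c₀ • sgen K q n₀
          = r * (y - f.sum fun n k => k • sgen K q n) + (S1 - S2) := by
        rw [mul_sub, e1, ← e3]
        abel
      rw [this]
      exact (Jid K q).add_mem (J_mul _ hfJ) e2
    -- sgen n₀ ∈ I
    have hsI : c₀ • sgen K q n₀ ∈ I := by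
      have hry : r * y ∈ I := I.smul_mem r hyI
      have : c₀ • sgen K q n₀ = r * y - (r * y - c₀ • sgen K q n₀) := by abel
      rw [this]
      exact I.sub_mem hry (hJI hclaim)
    have hsI' : sgen K q n₀ ∈ I := of_smul_mem hc₀0 hsI
    obtain ⟨u, c, hc, hu⟩ := shift_to_zero hq0 n₀
    have h1I : c • (1 : QuantumPlane K q) ∈ I := by
      have huI : u * sgen K q n₀ ∈ I := I.smul_mem u hsI'
      have : c • (1 : QuantumPlane K q)
          = u * sgen K q n₀ - (u * sgen K q n₀ - c • 1) := by abel
      rw [this]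
      exact I.sub_mem huI (hJI hu)
    rw [Ideal.eq_top_iff_one]
    exact of_smul_mem hc h1I

theorem no_shift_solution {c : K} (hc : c ≠ 0) (w : V K) :
    c • (Aop K w) - w ≠ Finsupp.single 0 1 := by
  intro h
  by_cases hw : w = 0
  · rw [hw, map_zero, smul_zero, sub_zero] at h
    exact one_ne_zero (Finsupp.single_eq_zero.mp h.symm)
  · have hne : w.support.Nonempty := Finsupp.support_nonempty_iff.mpr hw
    set N := w.support.max' hne with hN
    set n0 := w.support.min' hne with hn0
    have hNmem : N ∈ w.support := w.support.max'_mem hne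
    have hn0mem : n0 ∈ w.support := w.support.min'_mem hne
    have hcoord : ∀ m : ℤ, (Aop K w) m = w (m - 1) := by
      intro m
      rw [Aop, Finsupp.lmapDomain_apply]
      conv_lhs => rw [show m = (m - 1) + 1 by ring]
      exact Finsupp.mapDomain_apply (fun x y hxy => by omega) w (m - 1)
    have hwN1 : w (N + 1) = 0 := by
      refine Finsupp.notMem_support_iff.mp fun hmem => ?_
      have := Finset.le_max' _ _ hmem
      omega
    have hval : ∀ m : ℤ, c * w (m - 1) - w m = (Finsupp.single (0:ℤ) (1:K)) m := by
      intro m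
      have h2 := congrArg (fun v : V K => v m) h
      simpa [Finsupp.sub_apply, Finsupp.smul_apply, hcoord m, smul_eq_mul] using h2
    have hwN : w N ≠ 0 := Finsupp.mem_support_iff.mp hNmem
    have hNeq : N = -1 := by
      by_contra hne0
      have := hval (N + 1)
      rw [add_sub_cancel_right, hwN1, sub_zero, Finsupp.single_apply,
        if_neg (by omega : ¬ (0:ℤ) = N + 1)] at this
      exact mul_ne_zero hc hwN this
    have hw0' : w (n0 - 1) = 0 := by
      refine Finsupp.notMem_support_iff.mp fun hmem => ?_
      have := Finset.min'_le _ _ hmem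
      omega
    have hwn0 : w n0 ≠ 0 := Finsupp.mem_support_iff.mp hn0mem
    have hle : n0 ≤ N := Finset.min'_le _ _ hNmem
    have := hval n0
    rw [hw0', mul_zero, zero_sub, Finsupp.single_apply,
      if_neg (by omega : ¬ (0:ℤ) = n0)] at this
    exact hwn0 (by simpa using congrArg Neg.neg this)

theorem sigma_pow_a (σ : QuantumPlane K q ≃ₐ[K] QuantumPlane K q)
    (hσa : σ (qpA K q) = q⁻¹ • qpA K q) (m : ℕ) :
    (σ ^ m) (qpA K q) = (q⁻¹ ^ m) • qpA K q := by
  induction m with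
  | zero => simp
  | succ m ih =>
    rw [pow_succ, AlgEquiv.mul_apply, hσa, map_smul, ih, smul_smul, ← pow_succ']

include hq0 in
theorem no_sol (σ : QuantumPlane K q ≃ₐ[K] QuantumPlane K q)
    (hσa : σ (qpA K q) = q⁻¹ • qpA K q) (m : ℕ) :
    ¬ ∃ z : QuantumPlane K q,
      (σ ^ m) (qpA K q - 1) * z - 1 ∈ Jid K q := by
  rintro ⟨z, hz⟩
  have hσ : (σ ^ m) (qpA K q - 1) = (q⁻¹ ^ m) • qpA K q - 1 := by
    rw [map_sub, map_one, sigma_pow_a σ hσa]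
  rw [hσ] at hz
  set c : K := q⁻¹ ^ m with hcdef
  have hc : c ≠ 0 := pow_ne_zero _ (inv_ne_zero hq0)
  have h0 := rho_J hq0 hz
  set w : V K := rho K q hq0 z (Finsupp.single 0 1) with hwdef
  have key : c • (Aop K w) - w = Finsupp.single 0 1 := by
    have expand : rho K q hq0 ((c • qpA K q - 1) * z - 1) (Finsupp.single 0 1)
        = c • (Aop K w) - w - Finsupp.single 0 1 := by
      rw [map_sub, map_mul, map_sub, map_smul, map_one]
      simp only [LinearMap.sub_apply, Module.End.one_apply, LinearMap.smul_apply,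
        Module.End.mul_apply, rho_a]
      rfl
    rw [expand] at h0
    rwa [sub_eq_zero] at h0
  exact no_shift_solution hc w key

end Ring

end QP

/-- for the quantum plane with `q` not a root of unity, `σ` the `K`-algebra
automorphism with `σ a = q⁻¹ a`, `σ b = q b`, `J = A(ab − 1)` and `x = a − 1`:
`J` is a maximal left ideal and for every `m ≥ 0` there is no `z` with `σ^m x * z − 1 ∈ J`. -/


theorem quantumPlane_maximal_and_no_solution (K : Type*) [Field K] (q : K) (hq0 : q ≠ 0)
    (hq : ∀ n : ℕ, 0 < n → q ^ n ≠ 1)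
    (σ : QuantumPlane K q ≃ₐ[K] QuantumPlane K q)
    (hσa : σ (qpA K q) = q⁻¹ • qpA K q) (hσb : σ (qpB K q) = q • qpB K q) :
    (Ideal.span {qpA K q * qpB K q - 1}).IsMaximal ∧
    ∀ m : ℕ, ¬ ∃ z : QuantumPlane K q,
      (σ ^ m) (qpA K q - 1) * z - 1 ∈ Ideal.span {qpA K q * qpB K q - 1} := by
  exact ⟨QP.J_maximal hq0 hq, fun m => QP.no_sol hq0 σ hσa m⟩

end
end

section
/- Let K be a field of characteristic zero, let r ≥ 1 be an integer, and let d be the K-linear derivation of the polynomial ring K[a] determined by d(a) = a^r. Then every nonzero ideal Q of K[a] satisfying d(Q) ⊆ Q is generated by a power of a, i.e. Q = (a^m) for some m ≥ 0. -/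
open Polynomial

private lemma X_mul_derivative_X_pow {K : Type*} [Field K] (m : ℕ) :
    (X : K[X]) * derivative (X ^ m) = C (m : K) * X ^ m := by
  cases m with
  | zero => simp
  | succ n =>
    rw [derivative_X_pow, Nat.add_sub_cancel, pow_succ]
    ring

/-- Lemma 3.4: over a field of characteristic zero, for the derivation `d` of
`K[a]` with `d(a) = a^r` (`r ≥ 1`), every nonzero `d`-invariant ideal of `K[a]` is generated
by a power of `a`. -/
theorem derivation_invariant_ideal_is_power {K : Type*} [Field K] [CharZero K]
    (r : ℕ) (hr : 1 ≤ r)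
    (d : Derivation K (Polynomial K) (Polynomial K))
    (hd : d Polynomial.X = Polynomial.X ^ r)
    (Q : Ideal (Polynomial K)) (hQ : Q ≠ ⊥) (hdQ : ∀ p ∈ Q, d p ∈ Q) :
    ∃ m : ℕ, Q = Ideal.span {Polynomial.X ^ m} := by
  -- identify the derivation
  have hdeq : d = Polynomial.mkDerivation K (X ^ r) := by
    apply Polynomial.derivation_ext
    rw [hd, Polynomial.mkDerivation_X]
  have hdapp : ∀ p : K[X], d p = derivative p * X ^ r := by
    intro p
    rw [hdeq, Polynomial.mkDerivation_apply, smul_eq_mul, mul_comm]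
  -- get a generator
  obtain ⟨g, hgQ⟩ := Submodule.IsPrincipal.principal Q
  have hgQ' : Q = Ideal.span {g} := hgQ
  have hg0 : g ≠ 0 := by
    rintro rfl
    exact hQ (hgQ'.trans (Ideal.span_singleton_eq_bot.mpr rfl))
  have hgmem : g ∈ Q := hgQ' ▸ Ideal.mem_span_singleton_self g
  have hdvd : g ∣ derivative g * X ^ r := by
    have := hdQ g hgmem
    rw [hdapp, hgQ', Ideal.mem_span_singleton] at this
    exact this
  -- split off the power of X
  obtain ⟨h, hgh, hXh⟩ := g.exists_eq_pow_rootMultiplicity_mul_and_not_dvd hg0 0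
  set m := rootMultiplicity 0 g with hm
  rw [map_zero, sub_zero] at hgh hXh
  refine ⟨m, ?_⟩
  have hh0 : h ≠ 0 := by
    rintro rfl
    simp at hgh
    exact hg0 hgh
  -- key computation
  have hXg : X * derivative g = X ^ m * (C (m : K) * h + X * derivative h) := by
    have key := X_mul_derivative_X_pow (K := K) m
    rw [hgh, derivative_mul]
    calc X * (derivative (X ^ m) * h + X ^ m * derivative h)
        = (X * derivative (X ^ m)) * h + X ^ m * (X * derivative h) := by ring
      _ = (C (m : K) * X ^ m) * h + X ^ m * (X * derivative h) := by rw [key]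
      _ = X ^ m * (C (m : K) * h + X * derivative h) := by ring
  have hrr : r - 1 + 1 = r := Nat.sub_add_cancel hr
  have hdvd2 : h ∣ X ^ (r - 1) * (C (m : K) * h + X * derivative h) := by
    have h1 : X ^ m * h ∣ X ^ m * (X ^ (r - 1) * (C (m : K) * h + X * derivative h)) := by
      rw [← hgh]
      have hx : (X : K[X]) ^ (r - 1) * X = X ^ r := by rw [← pow_succ, hrr]
      have e1 : derivative g * X ^ r = X ^ (r - 1) * (X * derivative g) := by
        rw [← hx]; ring
      rw [show X ^ m * (X ^ (r - 1) * (C (m : K) * h + X * derivative h))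
          = X ^ (r - 1) * (X ^ m * (C (m : K) * h + X * derivative h)) by ring, ← hXg, ← e1]
      exact hdvd
    exact (mul_dvd_mul_iff_left (pow_ne_zero m (X_ne_zero (R := K)))).mp h1
  have hdvd3 : h ∣ X ^ r * derivative h := by
    have e : X ^ (r - 1) * (C (m : K) * h + X * derivative h)
        = h * (C (m : K) * X ^ (r - 1)) + X ^ r * derivative h := by
      rw [show (X : K[X]) ^ r = X ^ (r - 1) * X from by rw [← pow_succ, hrr]]; ring
    rw [e] at hdvd2
    exact (dvd_add_right (dvd_mul_right h _)).mp hdvd2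
  have hcop : IsCoprime h ((X : K[X]) ^ r) :=
    ((Polynomial.irreducible_X.coprime_iff_not_dvd.2 hXh).pow_left).symm
  have hdh : h ∣ derivative h := hcop.dvd_of_dvd_mul_left hdvd3
  have hdeg : h.natDegree = 0 := by
    by_contra hne
    have hd0 : derivative h ≠ 0 := fun hz =>
      hne (Polynomial.natDegree_eq_zero_of_derivative_eq_zero hz)
    have h1 := Polynomial.natDegree_le_of_dvd hdh hd0
    have h2 := Polynomial.natDegree_derivative_lt hne
    omega
  obtain ⟨c, rfl⟩ := Polynomial.natDegree_eq_zero.mp hdeg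
  have hc : c ≠ 0 := fun hz => hh0 (by simp [hz])
  rw [hgQ', hgh, Ideal.span_singleton_eq_span_singleton]
  exact Associated.symm ⟨(isUnit_C.2 hc.isUnit).unit, by simp⟩
end

section
/- Let K be a field of characteristic zero and let η ∈ K be nonzero and not a root of unity; set α = 1+η and β = −η. For λ ∈ K define the sequence λ_{−1} = 0, λ_0 = λ, and λ_n = α·λ_{n−1} + β·λ_{n−2} + 1 for n ≥ 1. Then the set of λ ∈ K such that λ_n ≠ 0 for all n ≥ 0 is infinite. -/
/-- The sequence `λ_{−1} = 0`, `λ_0 = l`, `λ_n = α·λ_{n−1} + β·λ_{n−2} + 1` (indexed from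
`0`, so `lamSeq α β l 1 = α·l + β·0 + 1`). -/
def lamSeq {K : Type*} [Field K] (α β : K) (l : K) : ℕ → K
  | 0 => l
  | 1 => α * l + β * 0 + 1
  | n + 2 => α * lamSeq α β l (n + 1) + β * lamSeq α β l n + 1

open Polynomial IntermediateField Filter

/-- Closed form (up to the factor `η - 1`) for the sequence started at `D - (η-1)⁻¹`. -/
lemma lamSeq_mul_formula {K : Type*} [Field K] (η D : K) (hη1 : η - 1 ≠ 0) :
    ∀ n : ℕ, (η - 1) * lamSeq (1 + η) (-η) (D - (η - 1)⁻¹) n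
      = D * (η ^ (n + 1) - 1) - ((n : K) + 1) := by
  intro n
  induction n using Nat.twoStepInduction with
  | zero => simp only [lamSeq]; field_simp; ring
  | one => simp only [lamSeq]; field_simp; ring
  | more n ih1 ih2 =>
      simp only [lamSeq]
      push_cast
      push_cast at ih1 ih2
      linear_combination (1 + η) * ih2 + (-η) * ih1

/-- Over `ℂ`, only finitely many naturals `m` satisfy `m (w^{n+1} - 1) = n + 1` for some
`n`. -/
lemma bad_finite_complex (w : ℂ) :
    {m : ℕ | ∃ n : ℕ, (m : ℂ) * (w ^ (n + 1) - 1) = (n : ℂ) + 1}.Finite := by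
  set r := ‖w‖ with hr_def
  have hr0 : 0 ≤ r := norm_nonneg w
  have key : ∀ m n : ℕ, (m : ℂ) * (w ^ (n + 1) - 1) = (n : ℂ) + 1 →
      (m : ℝ) * r ^ (n + 1) = (m : ℝ) + n + 1 := by
    intro m n h
    have h3 : (m : ℂ) * w ^ (n + 1) = ((m + n + 1 : ℕ) : ℂ) := by
      push_cast; linear_combination h
    have h4 := congrArg norm h3
    rw [norm_mul, norm_pow, Complex.norm_natCast, Complex.norm_natCast] at h4
    rw [← hr_def] at h4
    push_cast at h4 ⊢
    linarith [h4]
  by_cases hr : r ≤ 1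
  · refine Set.Finite.subset Set.finite_empty ?_
    rintro m ⟨n, h⟩
    exfalso
    have hk := key m n h
    have h1 : r ^ (n + 1) ≤ 1 := pow_le_one₀ hr0 hr
    have h2 : (m : ℝ) * r ^ (n + 1) ≤ (m : ℝ) * 1 :=
      mul_le_mul_of_nonneg_left h1 (Nat.cast_nonneg m)
    have h3 : (0 : ℝ) ≤ n := Nat.cast_nonneg n
    linarith
  · push_neg at hr
    have hlo := isLittleO_coe_const_pow_of_one_lt (R := ℝ) hr
    have hb := hlo.def (by norm_num : (0:ℝ) < 1/3)
    rw [eventually_atTop] at hb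
    obtain ⟨N, hN⟩ := hb
    set M := max N 2 with hM
    have hn_small : ∀ m n : ℕ, (m : ℂ) * (w ^ (n + 1) - 1) = (n : ℂ) + 1 → n < M := by
      intro m n h
      by_contra hcon
      push_neg at hcon
      have hnN : N ≤ n := le_trans (le_max_left _ _) hcon
      have hn2 : (2 : ℝ) ≤ n := by
        have : 2 ≤ n := le_trans (le_max_right _ _) hcon
        exact_mod_cast this
      have hbn := hN n hnN
      rw [Real.norm_natCast, Real.norm_eq_abs, abs_of_pos (pow_pos (lt_trans one_pos hr) n)] at hbn
      have hk := key m n h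
      have hm1 : (1 : ℝ) ≤ m := by
        rcases Nat.eq_zero_or_pos m with h0 | h0
        · subst h0; exfalso; push_cast at hk; nlinarith
        · exact_mod_cast h0
      have hrp : (0:ℝ) < r ^ (n+1) := pow_pos (lt_trans one_pos hr) _
      have h5 : (m : ℝ) * r ^ (n + 1) ≤ (m : ℝ) * ((n : ℝ) + 2) := by
        rw [hk]; nlinarith
      have h6 : r ^ (n + 1) ≤ (n : ℝ) + 2 := by
        have hm0 : (0:ℝ) < m := by linarith
        exact le_of_mul_le_mul_left h5 hm0
      have h7 : r ^ n ≤ r ^ (n + 1) := pow_le_pow_right₀ (le_of_lt hr) (Nat.le_succ n)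
      linarith
    have fib : ∀ n : ℕ, {m : ℕ | (m : ℂ) * (w ^ (n + 1) - 1) = (n : ℂ) + 1}.Subsingleton := by
      intro n m1 h1 m2 h2
      simp only [Set.mem_setOf_eq] at h1 h2
      have hw : w ^ (n + 1) - 1 ≠ 0 := by
        intro hz
        rw [hz, mul_zero] at h1
        have hcn : ((n + 1 : ℕ) : ℂ) ≠ 0 := Nat.cast_ne_zero.mpr n.succ_ne_zero
        push_cast at hcn
        exact hcn h1.symm
      exact_mod_cast mul_right_cancel₀ hw (h1.trans h2.symm)
    refine Set.Finite.subset (Set.Finite.biUnion (Set.finite_Iio M)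
      (fun n _ => (fib n).finite)) ?_
    rintro m ⟨n, hmn⟩
    exact Set.mem_biUnion (hn_small m n hmn) hmn

/-- If `η` is transcendental over `ℚ`, no natural `m` satisfies such an equation. -/
lemma bad_empty_of_trans {K : Type*} [Field K] [CharZero K] {η : K}
    (ht : Transcendental ℚ η) (m n : ℕ) :
    (m : K) * (η ^ (n + 1) - 1) ≠ (n : K) + 1 := by
  intro h
  have hm : m ≠ 0 := by
    intro h0
    subst h0
    have hcn : ((n + 1 : ℕ) : K) ≠ 0 := Nat.cast_ne_zero.mpr n.succ_ne_zero
    rw [Nat.cast_zero, zero_mul] at h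
    push_cast at hcn
    exact hcn h.symm
  apply ht
  refine ⟨C (m : ℚ) * X ^ (n + 1) - C ((m : ℚ) + n + 1), ?_, ?_⟩
  · intro h0
    have hc := congrArg (fun p => Polynomial.coeff p (n + 1)) h0
    simp [coeff_C, coeff_one, Nat.succ_ne_zero] at hc
    exact hm (by exact_mod_cast hc)
  · simp only [map_sub, map_mul, aeval_C, map_pow, aeval_X]
    have h1 : algebraMap ℚ K ((m : ℚ)) = (m : K) := by push_cast; simp
    have h2 : algebraMap ℚ K ((m : ℚ) + n + 1) = (m : K) + n + 1 := by push_cast; simp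
    rw [h1, h2]
    linear_combination h

/-- If `η` is algebraic over `ℚ`, transfer to `ℂ` via an embedding of `ℚ⟮η⟯`. -/
lemma bad_finite_alg {K : Type*} [Field K] [CharZero K] {η : K} (halg : IsAlgebraic ℚ η) :
    {m : ℕ | ∃ n : ℕ, (m : K) * (η ^ (n + 1) - 1) = (n : K) + 1}.Finite := by
  haveI : FiniteDimensional ℚ ℚ⟮η⟯ :=
    IntermediateField.adjoin.finiteDimensional halg.isIntegral
  let φ : ℚ⟮η⟯ →ₐ[ℚ] ℂ := IsAlgClosed.lift
  set w := φ (AdjoinSimple.gen ℚ η) with hw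
  refine Set.Finite.subset (bad_finite_complex w) ?_
  rintro m ⟨n, h⟩
  refine ⟨n, ?_⟩
  have hL : (m : ℚ⟮η⟯) * ((AdjoinSimple.gen ℚ η) ^ (n + 1) - 1) = (n : ℚ⟮η⟯) + 1 := by
    apply Subtype.coe_injective
    push_cast
    rw [AdjoinSimple.coe_gen]
    exact h
  have := congrArg φ hL
  simpa only [map_mul, map_pow, map_sub, map_natCast, map_one, map_add] using this

/-- Lemma 4.7: over a field of characteristic zero, if `η` is nonzero and
not a root of unity, `α = 1 + η`, `β = −η`, then the set of `λ ∈ K` for which the sequence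
`λ_n` (with `λ_{−1} = 0`, `λ_0 = λ`, `λ_n = αλ_{n−1} + βλ_{n−2} + 1`) never vanishes is
infinite.  (Equivalently, `A_η` has infinitely many pairwise non-isomorphic simple Verma
modules.) -/
theorem infinitely_many_simple_verma {K : Type*} [Field K] [CharZero K]
    (η : K) (hη0 : η ≠ 0) (hη : ∀ n : ℕ, 0 < n → η ^ n ≠ 1) :
    {l : K | ∀ n : ℕ, lamSeq (1 + η) (-η) l n ≠ 0}.Infinite := by
  have hη1 : η - 1 ≠ 0 := sub_ne_zero.mpr (by simpa using hη 1 one_pos)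
  have hbadfin : {m : ℕ | ∃ n : ℕ, (m : K) * (η ^ (n + 1) - 1) = (n : K) + 1}.Finite := by
    rcases em (IsAlgebraic ℚ η) with halg | htrans
    · exact bad_finite_alg halg
    · refine Set.Finite.subset Set.finite_empty ?_
      rintro m ⟨n, h⟩
      exact absurd h (bad_empty_of_trans htrans m n)
  have hGinf : ({m : ℕ | ∃ n : ℕ, (m : K) * (η ^ (n + 1) - 1) = (n : K) + 1}ᶜ).Infinite :=
    hbadfin.infinite_compl
  have hinj : Set.InjOn (fun m : ℕ => (m : K) - (η - 1)⁻¹)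
      ({m : ℕ | ∃ n : ℕ, (m : K) * (η ^ (n + 1) - 1) = (n : K) + 1}ᶜ) := by
    intro a _ b _ hab
    simp only at hab
    have : (a : K) = b := sub_left_inj.mp hab
    exact_mod_cast this
  have himg := hGinf.image hinj
  refine himg.mono ?_
  rintro l ⟨m, hm, rfl⟩
  intro n hzero
  apply hm
  refine ⟨n, ?_⟩
  have hf := lamSeq_mul_formula η (m : K) hη1 n
  rw [hzero, mul_zero] at hf
  linear_combination -hf
end
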